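/- Let $\nu$ be a $\sigma$-finite measure, $Q$ a $\nu$-reversible Markov kernel on a measurable space $(\mathsf{E},\mathscr{E})$, and $\pi$ a probability measure with density $\varpi = d\pi/d\nu$. Let $P$ be the Metropolis kernel with proposal $Q$ and acceptance function $\alpha(x,y)=\min\{1,\varpi(y)/\varpi(x)\}$, and let $\alpha_0 := \inf_x \int Q(x,dy)\,\alpha(x,y)$. Then for all $x,y\in\mathsf{E}$, $\|P(x,\cdot)-P(y,\cdot)\|_{TV} \le \|Q(x,\cdot)-Q(y,\cdot)\|_{TV} + 1 - \alpha_0$. -/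

import Mathlib

open MeasureTheory ProbabilityTheory Real
open scoped ENNReal

noncomputable section

/-- Total variation distance between two measures. -/
def tvDist {E : Type*} [MeasurableSpace E] (μ ν : Measure E) : ℝ :=
  ⨆ A : {A : Set E // MeasurableSet A}, |(μ A).toReal - (ν A).toReal|

lemma integrable_of_bound01 {E : Type*} [MeasurableSpace E] (μ : Measure E) [IsFiniteMeasure μ]
    (f : E → ℝ) (hf : Measurable f) (h0 : ∀ z, 0 ≤ f z) (h1 : ∀ z, f z ≤ 1) :
    Integrable f μ :=
  Integrable.mono' (integrable_const 1) hf.aestronglyMeasurable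
    (Filter.Eventually.of_forall fun z => by
      rw [Real.norm_eq_abs, abs_of_nonneg (h0 z)]; exact h1 z)

lemma tvDist_bddAbove {E : Type*} [MeasurableSpace E] (μ ν : Measure E)
    [IsProbabilityMeasure μ] [IsProbabilityMeasure ν] :
    BddAbove (Set.range fun A : {A : Set E // MeasurableSet A} =>
      |(μ A).toReal - (ν A).toReal|) := by
  refine ⟨2, ?_⟩
  rintro r ⟨A, rfl⟩
  have h1 : (μ (A : Set E)).toReal ≤ 1 := by
    have : μ (A : Set E) ≤ 1 := prob_le_one
    simpa using ENNReal.toReal_mono ENNReal.one_ne_top this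
  have h2 : (ν (A : Set E)).toReal ≤ 1 := by
    have : ν (A : Set E) ≤ 1 := prob_le_one
    simpa using ENNReal.toReal_mono ENNReal.one_ne_top this
  have h3 : (0:ℝ) ≤ (μ (A : Set E)).toReal := ENNReal.toReal_nonneg
  have h4 : (0:ℝ) ≤ (ν (A : Set E)).toReal := ENNReal.toReal_nonneg
  rw [abs_sub_le_iff]; constructor <;> linarith

lemma abs_toReal_sub_le_tvDist {E : Type*} [MeasurableSpace E] (μ ν : Measure E)
    [IsProbabilityMeasure μ] [IsProbabilityMeasure ν] (A : Set E) (hA : MeasurableSet A) :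
    (μ A).toReal - (ν A).toReal ≤ tvDist μ ν :=
  le_trans (le_abs_self _) (le_ciSup (tvDist_bddAbove μ ν) (⟨A, hA⟩ : {A : Set E // MeasurableSet A}))

lemma tvDist_symm {E : Type*} [MeasurableSpace E] (μ ν : Measure E) :
    tvDist μ ν = tvDist ν μ := by
  unfold tvDist
  exact iSup_congr fun A => abs_sub_comm _ _

/-- For `0 ≤ f ≤ 1`, the difference of set integrals is bounded by tvDist. -/
lemma setIntegral_diff_le_tvDist {E : Type*} [MeasurableSpace E] (μ ν : Measure E)
    [IsProbabilityMeasure μ] [IsProbabilityMeasure ν]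
    (f : E → ℝ) (hf : Measurable f) (h0 : ∀ z, 0 ≤ f z) (h1 : ∀ z, f z ≤ 1)
    (A : Set E) (hA : MeasurableSet A) :
    ∫ z in A, f z ∂μ - ∫ z in A, f z ∂ν ≤ tvDist μ ν := by
  obtain ⟨s, hs, hsle, hsge⟩ := hahn_decomposition (μ := μ) (ν := ν)
  set B := A ∩ s with hBdef
  set C := A \ s with hCdef
  have hB : MeasurableSet B := hA.inter hs
  have hC : MeasurableSet C := hA.diff hs
  have hdisj : Disjoint B C := Set.disjoint_sdiff_right.mono_left Set.inter_subset_right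
  have hunion : B ∪ C = A := Set.inter_union_diff A s
  have hintμ : Integrable f μ := integrable_of_bound01 μ f hf h0 h1
  have hintν : Integrable f ν := integrable_of_bound01 ν f hf h0 h1
  have hsplitμ : ∫ z in A, f z ∂μ = ∫ z in B, f z ∂μ + ∫ z in C, f z ∂μ := by
    rw [← hunion]
    exact setIntegral_union hdisj hC hintμ.integrableOn hintμ.integrableOn
  have hsplitν : ∫ z in A, f z ∂ν = ∫ z in B, f z ∂ν + ∫ z in C, f z ∂ν := by
    rw [← hunion]
    exact setIntegral_union hdisj hC hintν.integrableOn hintν.integrableOn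
  -- on C, μ ≤ ν
  have hCle : μ.restrict C ≤ ν.restrict C := by
    refine Measure.le_iff.2 fun t ht => ?_
    rw [Measure.restrict_apply ht, Measure.restrict_apply ht]
    exact hsge _ (ht.inter hC) (Set.Subset.trans Set.inter_subset_right (Set.diff_subset_compl A s))
  have h2 : ∫ z in C, f z ∂μ ≤ ∫ z in C, f z ∂ν :=
    integral_mono_measure hCle (Filter.Eventually.of_forall h0) hintν.integrableOn
  -- on B, ν ≤ μ
  have hBle : ν.restrict B ≤ μ.restrict B := by
    refine Measure.le_iff.2 fun t ht => ?_
    rw [Measure.restrict_apply ht, Measure.restrict_apply ht]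
    exact hsle _ (ht.inter hB) (Set.Subset.trans Set.inter_subset_right Set.inter_subset_right)
  have h3 : ∫ z in B, (1 - f z) ∂ν ≤ ∫ z in B, (1 - f z) ∂μ :=
    integral_mono_measure hBle
      (Filter.Eventually.of_forall fun z => by simp only [Pi.zero_apply]; linarith [h1 z])
      ((integrable_const 1).sub hintμ).integrableOn
  have hμB : ∫ z in B, (1 - f z) ∂μ = (μ B).toReal - ∫ z in B, f z ∂μ := by
    rw [integral_sub (integrable_const 1).integrableOn hintμ.integrableOn]
    simp [setIntegral_const, Measure.real]
  have hνB : ∫ z in B, (1 - f z) ∂ν = (ν B).toReal - ∫ z in B, f z ∂ν := by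
    rw [integral_sub (integrable_const 1).integrableOn hintν.integrableOn]
    simp [setIntegral_const, Measure.real]
  have h4 : (μ B).toReal - (ν B).toReal ≤ tvDist μ ν := abs_toReal_sub_le_tvDist μ ν B hB
  rw [hμB, hνB] at h3
  rw [hsplitμ, hsplitν]
  linarith

/-- A close-coupling bound for Metropolis kernels: the total variation distance between
`P(x,·)` and `P(y,·)` is at most that of the proposals plus `1 - α₀`. -/
theorem stmt2 {E : Type*} [MeasurableSpace E]
    (ν : Measure E) [SigmaFinite ν]
    (Q : Kernel E E) [IsMarkovKernel Q]
    (hrev : ∀ A B : Set E, MeasurableSet A → MeasurableSet B →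
      ∫⁻ x in A, Q x B ∂ν = ∫⁻ x in B, Q x A ∂ν)
    (pm : Measure E) [IsProbabilityMeasure pm]
    (ϖ : E → ℝ) (hϖmeas : Measurable ϖ) (hϖpos : ∀ x, 0 < ϖ x)
    (hdens : pm = ν.withDensity fun x => ENNReal.ofReal (ϖ x))
    (P : Kernel E E) [IsMarkovKernel P]
    (hP : ∀ (x : E) (A : Set E), MeasurableSet A →
      P x A = (∫⁻ y in A, ENNReal.ofReal (min 1 (ϖ y / ϖ x)) ∂(Q x)) +
        A.indicator (fun _ => ENNReal.ofReal (1 - ∫ y, min 1 (ϖ y / ϖ x) ∂(Q x))) x)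
    (α₀ : ℝ) (hα₀ : α₀ = ⨅ x : E, ∫ y, min 1 (ϖ y / ϖ x) ∂(Q x))
    (x y : E) :
    tvDist (P x) (P y) ≤ tvDist (Q x) (Q y) + 1 - α₀ := by
  classical
  set αf : E → E → ℝ := fun x z => min 1 (ϖ z / ϖ x) with hαf
  set a : E → ℝ := fun x => ∫ z, αf x z ∂(Q x) with ha
  have hα0 : ∀ u z, 0 ≤ αf u z := fun u z =>
    le_min zero_le_one (div_nonneg (hϖpos z).le (hϖpos u).le)
  have hα1 : ∀ u z, αf u z ≤ 1 := fun u z => min_le_left _ _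
  have hαmeas : ∀ u, Measurable (αf u) := fun u =>
    measurable_const.min (hϖmeas.div_const _)
  have hαint : ∀ u v : E, Integrable (αf u) (Q v) := fun u v =>
    integrable_of_bound01 (Q v) (αf u) (hαmeas u) (hα0 u) (hα1 u)
  have ha_nonneg : ∀ u, 0 ≤ a u := fun u =>
    integral_nonneg (hα0 u)
  have ha_le_one : ∀ u, a u ≤ 1 := fun u => by
    calc a u ≤ ∫ _, (1:ℝ) ∂(Q u) := integral_mono (hαint u u) (integrable_const 1) (hα1 u)
    _ = 1 := by simp
  have hα₀_le : ∀ u, α₀ ≤ a u := fun u => by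
    rw [hα₀]
    exact ciInf_le ⟨0, by rintro r ⟨v, rfl⟩; exact ha_nonneg v⟩ u
  -- toReal formula for P
  have hPtoReal : ∀ (u : E) (A : Set E), MeasurableSet A →
      (P u A).toReal = (∫ z in A, αf u z ∂(Q u)) + A.indicator (fun _ => 1 - a u) u := by
    intro u A hA
    rw [hP u A hA]
    have hlin : ∫⁻ z in A, ENNReal.ofReal (min 1 (ϖ z / ϖ u)) ∂(Q u)
        = ENNReal.ofReal (∫ z in A, αf u z ∂(Q u)) := by
      rw [← ofReal_integral_eq_lintegral_ofReal (hαint u u).integrableOn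
        (Filter.Eventually.of_forall (hα0 u))]
    rw [hlin]
    rw [ENNReal.toReal_add ENNReal.ofReal_ne_top]
    · congr 1
      · exact ENNReal.toReal_ofReal (integral_nonneg (hα0 u))
      · by_cases hu : u ∈ A
        · simp only [Set.indicator_of_mem hu]
          exact ENNReal.toReal_ofReal (by linarith [ha_le_one u])
        · simp [Set.indicator_of_notMem hu]
    · by_cases hu : u ∈ A
      · simp [Set.indicator_of_mem hu]
      · simp [Set.indicator_of_notMem hu]
  -- key one-sided bound
  have hkey : ∀ u v : E, ϖ v ≤ ϖ u → ∀ A : Set E, MeasurableSet A →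
      (P u A).toReal - (P v A).toReal ≤ tvDist (Q u) (Q v) + 1 - α₀ := by
    intro u v huv A hA
    rw [hPtoReal u A hA, hPtoReal v A hA]
    have hmono : ∀ z, αf u z ≤ αf v z := fun z =>
      min_le_min le_rfl (div_le_div_of_nonneg_left (hϖpos z).le (hϖpos v) huv)
    have h1 : ∫ z in A, αf u z ∂(Q u) - ∫ z in A, αf u z ∂(Q v) ≤ tvDist (Q u) (Q v) :=
      setIntegral_diff_le_tvDist (Q u) (Q v) (αf u) (hαmeas u) (hα0 u) (hα1 u) A hA
    have h2 : ∫ z in A, αf u z ∂(Q v) ≤ ∫ z in A, αf v z ∂(Q v) :=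
      setIntegral_mono (hαint u v).integrableOn (hαint v v).integrableOn hmono
    have h3 : A.indicator (fun _ => 1 - a u) u ≤ 1 - α₀ := by
      by_cases hu : u ∈ A
      · simp only [Set.indicator_of_mem hu]; linarith [hα₀_le u]
      · simp only [Set.indicator_of_notMem hu]
        linarith [hα₀_le u, ha_le_one u]
    have h4 : (0:ℝ) ≤ A.indicator (fun _ => 1 - a v) v := by
      by_cases hv : v ∈ A
      · simp only [Set.indicator_of_mem hv]; linarith [ha_le_one v]
      · simp [Set.indicator_of_notMem hv]
    linarith
  -- complement identity
  have hcompl : ∀ (u : E) (A : Set E), MeasurableSet A →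
      (P u Aᶜ).toReal = 1 - (P u A).toReal := by
    intro u A hA
    rw [measure_compl hA (measure_ne_top _ _), measure_univ,
      ENNReal.toReal_sub_of_le prob_le_one ENNReal.one_ne_top]
    simp
  -- conclude
  haveI : Nonempty {A : Set E // MeasurableSet A} := ⟨⟨∅, MeasurableSet.empty⟩⟩
  refine ciSup_le ?_
  rintro ⟨A, hA⟩
  rw [abs_sub_le_iff]
  rcases le_total (ϖ y) (ϖ x) with h | h
  · constructor
    · exact hkey x y h A hA
    · have := hkey x y h Aᶜ hA.compl
      rw [hcompl x A hA, hcompl y A hA] at this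
      linarith
  · have hsymm : tvDist (Q y) (Q x) = tvDist (Q x) (Q y) := tvDist_symm _ _
    constructor
    · have := hkey y x h Aᶜ hA.compl
      rw [hcompl x A hA, hcompl y A hA, hsymm] at this
      linarith
    · have := hkey y x h A hA
      rw [hsymm] at this
      linarith
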